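/- The deterministic equivalent ILP-3DKP(Z) has the same optimal value as the TSS-3DKP, provided Z is an upper bound such that some optimal solution of TSS-3DKP uses at most Z printers: every feasible solution of ILP-3DKP(Z) induces a feasible TSS-3DKP solution with equal objective, and every TSS-3DKP solution with a_p ≤ Z induces a feasible ILP-3DKP(Z) solution with equal objective (setting y_j = 1 for j ≤ a_p and 0 otherwise). -/
import Mathlib


section
variable {N S : Type} [Fintype N] [Fintype S]

/-- Feasibility of a solution of the deterministic equivalent ILP-3DKP(Z):
binary printer indicators `y` (with the symmetry-breaking constraints
`y j ≤ y (j-1)`), first-stage variables `a`, `ab`, and scenario-indexed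
second-stage variables `as`, `p`; constraints (13)–(25) of the paper. -/
def ILPfeas (Np : Finset N) (d : S → N → ℕ) (w v m t : N → ℕ)
    (wp vp wb vb W V M T Z : ℕ)
    (y : ℕ → ℕ) (a : N → ℕ) (ab : ℕ) (as : S → N → ℕ) (p : S → N → ℕ → ℕ) : Prop :=
  (∀ j, y j ≤ 1) ∧ (∀ j, Z ≤ j → y j = 0) ∧
  (∀ j, 1 ≤ j → y j ≤ y (j - 1)) ∧
  (∑ i, a i * w i) + ab * wb + (∑ j ∈ Finset.range Z, y j) * wp ≤ W ∧
  (∑ i, a i * v i) + ab * vb + (∑ j ∈ Finset.range Z, y j) * vp ≤ V ∧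
  ab ≤ (∑ j ∈ Finset.range Z, y j) * M ∧
  (∀ s, ∀ i ∉ Np, as s i ≤ d s i) ∧
  (∀ s, ∀ i ∈ Np, as s i + ∑ j ∈ Finset.range Z, p s i j ≤ d s i) ∧
  (∀ s i, as s i ≤ a i) ∧
  (∀ s, (∑ i ∈ Np, ∑ j ∈ Finset.range Z, p s i j * m i) ≤ ab) ∧
  (∀ s j, j < Z → (∑ i ∈ Np, p s i j * t i) ≤ T * y j) ∧
  (∀ s i j, Z ≤ j → p s i j = 0)

/-- Feasibility of a (two-stage) solution of the TSS-3DKP: first-stage decision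
`(a, ap, ab)` and, for every scenario, second-stage decisions `as`, `p` using
printers `0, …, ap - 1`. -/
def TSSfeas (Np : Finset N) (d : S → N → ℕ) (w v m t : N → ℕ)
    (wp vp wb vb W V M T : ℕ)
    (a : N → ℕ) (ap ab : ℕ) (as : S → N → ℕ) (p : S → N → ℕ → ℕ) : Prop :=
  (∑ i, a i * w i) + ap * wp + ab * wb ≤ W ∧
  (∑ i, a i * v i) + ap * vp + ab * vb ≤ V ∧
  ab ≤ ap * M ∧
  (∀ s, ∀ i ∉ Np, as s i ≤ d s i) ∧
  (∀ s, ∀ i ∈ Np, as s i + ∑ j ∈ Finset.range ap, p s i j ≤ d s i) ∧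
  (∀ s i, as s i ≤ a i) ∧
  (∀ s, (∑ i ∈ Np, ∑ j ∈ Finset.range ap, p s i j * m i) ≤ ab) ∧
  (∀ s j, j < ap → (∑ i ∈ Np, p s i j * t i) ≤ T) ∧
  (∀ s i j, ap ≤ j → p s i j = 0)

/-- The (expected total reward) objective value, where printing variables for
printers `0, …, K - 1` are counted. -/
noncomputable def objVal (Np : Finset N) (q : S → ℝ) (r : N → ℝ) (α : ℝ) (K : ℕ)
    (as : S → N → ℕ) (p : S → N → ℕ → ℕ) : ℝ :=
  ∑ s, q s * ((∑ i, (as s i : ℝ) * r i)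
    + α * ∑ i ∈ Np, ∑ j ∈ Finset.range K, (p s i j : ℝ) * r i)

lemma sum_extend {M : Type*} [AddCommMonoid M] {f : ℕ → M} {ap Z : ℕ} (h : ap ≤ Z)
    (h0 : ∀ j, ap ≤ j → f j = 0) :
    ∑ j ∈ Finset.range ap, f j = ∑ j ∈ Finset.range Z, f j :=
  Finset.sum_subset (Finset.range_subset_range.mpr h)
    (fun j _ hj => h0 j (le_of_not_gt (by simpa using hj)))

lemma sum_ite_lt (c Z : ℕ) (h : c ≤ Z) :
    ∑ j ∈ Finset.range Z, (if j < c then 1 else 0 : ℕ) = c := by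
  rw [← sum_extend h (fun j hj => if_neg (not_lt.mpr hj))]
  rw [Finset.sum_congr rfl (fun j hj => if_pos (Finset.mem_range.mp hj))]
  simp

lemma staircase (y : ℕ → ℕ) (Z : ℕ) (h1 : ∀ j, y j ≤ 1)
    (h2 : ∀ j, Z ≤ j → y j = 0) (h3 : ∀ j, 1 ≤ j → y j ≤ y (j - 1)) :
    (∑ j ∈ Finset.range Z, y j) ≤ Z ∧
    ∀ j, y j = if j < ∑ j ∈ Finset.range Z, y j then 1 else 0 := by
  have anti : ∀ j k, j ≤ k → y k ≤ y j := by
    intro j k hjk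
    induction k, hjk using Nat.le_induction with
    | base => exact le_refl _
    | succ n hn ih =>
      have := h3 (n + 1) (by omega)
      simpa using this.trans ih
  have hZ0 : y Z = 0 := h2 Z le_rfl
  have hex : ∃ j, y j = 0 := ⟨Z, hZ0⟩
  set c := Nat.find hex with hc
  have hc0 : y c = 0 := Nat.find_spec hex
  have hcmin : ∀ j, j < c → y j ≠ 0 := fun j hj => Nat.find_min hex hj
  have hcZ : c ≤ Z := Nat.find_le hZ0
  have yform : ∀ j, y j = if j < c then 1 else 0 := by
    intro j
    by_cases hj : j < c
    · rw [if_pos hj]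
      have := hcmin j hj
      have := h1 j
      omega
    · rw [if_neg hj]
      have := anti c j (not_lt.mp hj)
      omega
  have hsum : (∑ j ∈ Finset.range Z, y j) = c := by
    rw [Finset.sum_congr rfl (fun j _ => yform j)]
    exact sum_ite_lt c Z hcZ
  rw [hsum]
  exact ⟨hcZ, yform⟩

/-- the deterministic equivalent ILP-3DKP(Z) has the same optimal
value as the TSS-3DKP (for any `Z` bounding the number of printers of some optimal
solution): every feasible ILP solution induces a feasible TSS-3DKP solution with
equal objective, and every TSS-3DKP solution with `ap ≤ Z` induces a feasible ILP
solution with equal objective, setting `y j = 1` for `j < ap` and `0` otherwise. -/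
theorem stmt_11 (Np : Finset N) (q : S → ℝ) (d : S → N → ℕ) (r : N → ℝ) (α : ℝ)
    (w v m t : N → ℕ) (wp vp wb vb W V M T Z : ℕ)
    (ht : ∀ i ∈ Np, 1 ≤ t i) :
    (∀ (y : ℕ → ℕ) (a : N → ℕ) (ab : ℕ) (as : S → N → ℕ) (p : S → N → ℕ → ℕ),
      ILPfeas Np d w v m t wp vp wb vb W V M T Z y a ab as p →
      ∃ (ap : ℕ) (as' : S → N → ℕ) (p' : S → N → ℕ → ℕ),
        ap ≤ Z ∧
        TSSfeas Np d w v m t wp vp wb vb W V M T a ap ab as' p' ∧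
        objVal Np q r α ap as' p' = objVal Np q r α Z as p) ∧
    (∀ (a : N → ℕ) (ap ab : ℕ) (as : S → N → ℕ) (p : S → N → ℕ → ℕ),
      TSSfeas Np d w v m t wp vp wb vb W V M T a ap ab as p →
      ap ≤ Z →
      ∃ (y : ℕ → ℕ) (as' : S → N → ℕ) (p' : S → N → ℕ → ℕ),
        (∀ j, y j = if j < ap then 1 else 0) ∧
        ILPfeas Np d w v m t wp vp wb vb W V M T Z y a ab as' p' ∧
        objVal Np q r α Z as' p' = objVal Np q r α ap as p) := by
  classical
  constructor
  · intro y a ab as p hf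
    obtain ⟨h1, h2, h3, h4, h5, h6, h7, h8, h9, h10, h11, h12⟩ := hf
    obtain ⟨hapZ, yform⟩ := staircase y Z h1 h2 h3
    set ap := ∑ j ∈ Finset.range Z, y j with hap
    have pz : ∀ s, ∀ i ∈ Np, ∀ j, ap ≤ j → p s i j = 0 := by
      intro s i hi j hj
      rcases lt_or_ge j Z with hjZ | hjZ
      · have hy : y j = 0 := by rw [yform j, if_neg (not_lt.mpr hj)]
        have h0 : (∑ i ∈ Np, p s i j * t i) = 0 := by
          have := h11 s j hjZ
          rw [hy, Nat.mul_zero] at this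
          omega
        have hterm := (Finset.sum_eq_zero_iff.mp h0) i hi
        have hti := ht i hi
        rcases Nat.mul_eq_zero.mp hterm with h | h
        · exact h
        · omega
      · exact h12 s i j hjZ
    refine ⟨ap, as, fun s i j => if i ∈ Np then p s i j else 0, hapZ, ?_, ?_⟩
    · refine ⟨by rw [add_right_comm]; exact h4, by rw [add_right_comm]; exact h5,
        h6, h7, ?_, h9, ?_, ?_, ?_⟩
      · intro s i hi
        simp only [if_pos hi]
        rw [sum_extend hapZ (fun j hj => pz s i hi j hj)]
        exact h8 s i hi
      · intro s
        calc (∑ i ∈ Np, ∑ j ∈ Finset.range ap,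
              (if i ∈ Np then p s i j else 0) * m i)
            = ∑ i ∈ Np, ∑ j ∈ Finset.range Z, p s i j * m i := by
              refine Finset.sum_congr rfl (fun i hi => ?_)
              simp only [if_pos hi]
              exact sum_extend hapZ (fun j hj => by rw [pz s i hi j hj, Nat.zero_mul])
          _ ≤ ab := h10 s
      · intro s j hj
        have hy : y j = 1 := by rw [yform j, if_pos hj]
        calc (∑ i ∈ Np, (if i ∈ Np then p s i j else 0) * t i)
            = ∑ i ∈ Np, p s i j * t i :=
              Finset.sum_congr rfl (fun i hi => by rw [if_pos hi])
          _ ≤ T * y j := h11 s j (lt_of_lt_of_le hj hapZ)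
          _ = T := by rw [hy, Nat.mul_one]
      · intro s i j hj
        by_cases hi : i ∈ Np
        · simp only [if_pos hi]; exact pz s i hi j hj
        · simp only [if_neg hi]
    · unfold objVal
      refine Finset.sum_congr rfl (fun s _ => ?_)
      have : (∑ i ∈ Np, ∑ j ∈ Finset.range ap,
            ((if i ∈ Np then p s i j else 0 : ℕ) : ℝ) * r i)
          = ∑ i ∈ Np, ∑ j ∈ Finset.range Z, (p s i j : ℝ) * r i := by
        refine Finset.sum_congr rfl (fun i hi => ?_)
        simp only [if_pos hi]
        exact sum_extend hapZ (fun j hj => by rw [pz s i hi j hj]; simp)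
      rw [this]
  · intro a ap ab as p hf hapZ
    obtain ⟨h4, h5, h6, h7, h8, h9, h10, h11, h12⟩ := hf
    refine ⟨fun j => if j < ap then 1 else 0, as, p, fun j => rfl, ?_, ?_⟩
    · have hsumy : (∑ j ∈ Finset.range Z, if j < ap then 1 else 0 : ℕ) = ap :=
        sum_ite_lt ap Z hapZ
      have psum : ∀ s i, ∑ j ∈ Finset.range ap, p s i j
          = ∑ j ∈ Finset.range Z, p s i j := fun s i =>
        sum_extend hapZ (fun j hj => h12 s i j hj)
      refine ⟨fun j => by dsimp only; split <;> omega,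
        fun j hj => if_neg (not_lt.mpr (le_trans hapZ hj)),
        fun j hj => ?_, ?_, ?_, ?_, h7, ?_, h9, ?_, ?_, fun s i j hj => h12 s i j (le_trans hapZ hj)⟩
      · dsimp only
        by_cases h : j < ap
        · rw [if_pos h, if_pos (by omega : j - 1 < ap)]
        · rw [if_neg h]; split <;> omega
      · rw [hsumy, add_right_comm]; exact h4
      · rw [hsumy, add_right_comm]; exact h5
      · rw [hsumy]; exact h6
      · intro s i hi
        rw [← psum s i]
        exact h8 s i hi
      · intro s
        calc (∑ i ∈ Np, ∑ j ∈ Finset.range Z, p s i j * m i)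
            = ∑ i ∈ Np, ∑ j ∈ Finset.range ap, p s i j * m i := by
              refine Finset.sum_congr rfl (fun i _ => ?_)
              exact (sum_extend hapZ (fun j hj => by rw [h12 s i j hj, Nat.zero_mul])).symm
          _ ≤ ab := h10 s
      · intro s j hjZ
        dsimp only
        by_cases h : j < ap
        · rw [if_pos h, Nat.mul_one]; exact h11 s j h
        · rw [if_neg h, Nat.mul_zero]
          have : (∑ i ∈ Np, p s i j * t i) = 0 :=
            Finset.sum_eq_zero (fun i _ => by rw [h12 s i j (not_lt.mp h), Nat.zero_mul])
          omega
    · unfold objVal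
      refine Finset.sum_congr rfl (fun s _ => ?_)
      have : (∑ i ∈ Np, ∑ j ∈ Finset.range Z, (p s i j : ℝ) * r i)
          = ∑ i ∈ Np, ∑ j ∈ Finset.range ap, (p s i j : ℝ) * r i := by
        refine Finset.sum_congr rfl (fun i _ => ?_)
        exact (sum_extend hapZ (fun j hj => by rw [h12 s i j hj]; simp)).symm
      rw [this]

end
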